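/- (Subgradient lower bound for the iteration gap, quantitative form.) Let θ̄ > 0 and L ≥ 0 satisfy |φ'(s) − φ'(t)| ≤ L|s − t| for all s, t ≥ θ̄. Let ρ > 0, 0 < ε < 1, let x, x' ∈ ℝ^N, let S̄ ⊆ J satisfy |G_iᵀ x| ≥ θ̄ and |G_iᵀ x'| ≥ θ̄ for every i ∈ S̄, and let h ∈ ℝ^N satisfy ‖h‖₂ ≤ (ρε/2)‖x' − x‖₂. Then the vector s = h + Σ_{i∈S̄} (φ'(|G_iᵀ x'|) − φ'(|G_iᵀ x|))·(G_iᵀ x' / |G_iᵀ x'|)·G_i − ρ(x' − x) satisfies ‖s‖₂ ≤ (L·Σ_{i∈J} ‖G_i‖₂² + ρ(1 + ε/2))·‖x' − x‖₂. -/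

import Mathlib

/-- The dot product `gᵀ x` of two vectors in `ℝ^N`. -/
noncomputable def dotp {N : ℕ} (g x : Fin N → ℝ) : ℝ := ∑ l, g l * x l

/-- The Euclidean norm `‖x‖₂` on `ℝ^N`. -/
noncomputable def norm2 {N : ℕ} (x : Fin N → ℝ) : ℝ := Real.sqrt (∑ l, (x l) ^ 2)

/-- subgradient lower bound for the iteration gap, quantitative
form. If `φ'` is `L`-Lipschitz on `[θ̄,∞)`, `|G_iᵀ x| ≥ θ̄` and `|G_iᵀ x'| ≥ θ̄`
on `S̄`, and `‖h‖₂ ≤ (ρε/2)‖x' − x‖₂`, then the vector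
`s = h + Σ_{i∈S̄}(φ'(|G_iᵀ x'|) − φ'(|G_iᵀ x|))·(G_iᵀ x'/|G_iᵀ x'|)·G_i − ρ(x' − x)`
satisfies `‖s‖₂ ≤ (L Σ_{i∈J} ‖G_i‖₂² + ρ(1 + ε/2)) ‖x' − x‖₂`. -/
theorem subgradient_bound_iteration_gap {N : ℕ} {ι : Type} [Fintype ι]
    (G : ι → Fin N → ℝ) (φ φ' : ℝ → ℝ)
    (hderiv : ∀ t : ℝ, 0 < t → HasDerivAt φ (φ' t) t)
    (θb L : ℝ) (hθb : 0 < θb) (hL : 0 ≤ L)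
    (hlip : ∀ s t : ℝ, θb ≤ s → θb ≤ t → |φ' s - φ' t| ≤ L * |s - t|)
    (ρ ε : ℝ) (hρ : 0 < ρ) (hε0 : 0 < ε) (hε1 : ε < 1)
    (x x' h : Fin N → ℝ) (Sb : Finset ι)
    (hx : ∀ i ∈ Sb, θb ≤ |dotp (G i) x|)
    (hx' : ∀ i ∈ Sb, θb ≤ |dotp (G i) x'|)
    (hh : norm2 h ≤ ρ * ε / 2 * norm2 (x' - x)) :
    norm2 (h + (∑ i ∈ Sb, ((φ' |dotp (G i) x'| - φ' |dotp (G i) x|) *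
        (dotp (G i) x' / |dotp (G i) x'|)) • G i) - ρ • (x' - x)) ≤
      (L * (∑ i : ι, norm2 (G i) ^ 2) + ρ * (1 + ε / 2)) * norm2 (x' - x) := by
  classical
  set Lm := (WithLp.linearEquiv 2 ℝ (Fin N → ℝ)).symm with hLmdef
  have hn : ∀ v : Fin N → ℝ, norm2 v = ‖Lm v‖ := by
    intro v
    rw [norm2, EuclideanSpace.norm_eq]
    congr 1
    refine Finset.sum_congr rfl fun l _ => ?_
    rw [Real.norm_eq_abs, sq_abs]
    rfl
  have hdot : ∀ g v : Fin N → ℝ, dotp g v = (inner ℝ (Lm g) (Lm v) : ℝ) := by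
    intro g v
    rw [dotp, PiLp.inner_apply]
    simp only [Real.inner_apply]
    rfl
  set c : ι → ℝ := fun i => (φ' |dotp (G i) x'| - φ' |dotp (G i) x|) *
      (dotp (G i) x' / |dotp (G i) x'|) with hc
  set d := x' - x with hd
  have hdsub : ∀ g : Fin N → ℝ, dotp g d = dotp g x' - dotp g x := by
    intro g
    simp [dotp, hd, mul_sub, Finset.sum_sub_distrib]
  have hcoef : ∀ i ∈ Sb, |c i| ≤ L * ‖Lm (G i)‖ * ‖Lm d‖ := by
    intro i hi
    have ha' : (0:ℝ) < |dotp (G i) x'| := lt_of_lt_of_le hθb (hx' i hi)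
    have h1 : abs (dotp (G i) x' / |dotp (G i) x'|) = 1 := by
      rw [abs_div, abs_abs, div_self ha'.ne']
    rw [hc, abs_mul, h1, mul_one]
    calc abs (φ' |dotp (G i) x'| - φ' |dotp (G i) x|)
        ≤ L * abs (|dotp (G i) x'| - |dotp (G i) x|) := hlip _ _ (hx' i hi) (hx i hi)
      _ ≤ L * |dotp (G i) x' - dotp (G i) x| :=
          mul_le_mul_of_nonneg_left (abs_abs_sub_abs_le_abs_sub _ _) hL
      _ = L * |(inner ℝ (Lm (G i)) (Lm d) : ℝ)| := by rw [← hdsub, hdot]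
      _ ≤ L * (‖Lm (G i)‖ * ‖Lm d‖) :=
          mul_le_mul_of_nonneg_left (abs_real_inner_le_norm _ _) hL
      _ = L * ‖Lm (G i)‖ * ‖Lm d‖ := (mul_assoc _ _ _).symm
  have hsum : ‖∑ i ∈ Sb, c i • Lm (G i)‖ ≤ L * (∑ i : ι, ‖Lm (G i)‖ ^ 2) * ‖Lm d‖ := by
    calc ‖∑ i ∈ Sb, c i • Lm (G i)‖ ≤ ∑ i ∈ Sb, ‖c i • Lm (G i)‖ := norm_sum_le _ _
      _ ≤ ∑ i ∈ Sb, L * ‖Lm (G i)‖ ^ 2 * ‖Lm d‖ := by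
          refine Finset.sum_le_sum fun i hi => ?_
          rw [norm_smul, Real.norm_eq_abs]
          calc |c i| * ‖Lm (G i)‖ ≤ (L * ‖Lm (G i)‖ * ‖Lm d‖) * ‖Lm (G i)‖ :=
                mul_le_mul_of_nonneg_right (hcoef i hi) (norm_nonneg _)
            _ = L * ‖Lm (G i)‖ ^ 2 * ‖Lm d‖ := by ring
      _ ≤ ∑ i : ι, L * ‖Lm (G i)‖ ^ 2 * ‖Lm d‖ := by
          refine Finset.sum_le_sum_of_subset_of_nonneg (Finset.subset_univ _) fun i _ _ => ?_
          positivity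
      _ = L * (∑ i : ι, ‖Lm (G i)‖ ^ 2) * ‖Lm d‖ := by
          simp only [← Finset.sum_mul, ← Finset.mul_sum]
  have key : Lm (h + (∑ i ∈ Sb, c i • G i) - ρ • d)
      = Lm h + (∑ i ∈ Sb, c i • Lm (G i)) - ρ • Lm d := by
    simp [map_add, map_sub, map_sum, map_smul]
  rw [hn, key]
  have hnd : norm2 d = ‖Lm d‖ := hn d
  have hh' : ‖Lm h‖ ≤ ρ * ε / 2 * ‖Lm d‖ := by rw [← hn, ← hnd]; exact hh
  calc ‖Lm h + (∑ i ∈ Sb, c i • Lm (G i)) - ρ • Lm d‖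
      ≤ ‖Lm h + (∑ i ∈ Sb, c i • Lm (G i))‖ + ‖ρ • Lm d‖ := norm_sub_le _ _
    _ ≤ ‖Lm h‖ + ‖∑ i ∈ Sb, c i • Lm (G i)‖ + ‖ρ • Lm d‖ := by
        gcongr; exact norm_add_le _ _
    _ ≤ ρ * ε / 2 * ‖Lm d‖ + L * (∑ i : ι, ‖Lm (G i)‖ ^ 2) * ‖Lm d‖ + ρ * ‖Lm d‖ :=
        add_le_add (add_le_add hh' hsum)
          (le_of_eq (by rw [norm_smul, Real.norm_eq_abs, abs_of_pos hρ]))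
    _ = (L * (∑ i : ι, ‖Lm (G i)‖ ^ 2) + ρ * (1 + ε / 2)) * ‖Lm d‖ := by ring
    _ = (L * (∑ i : ι, norm2 (G i) ^ 2) + ρ * (1 + ε / 2)) * norm2 d := by
        simp only [hn]
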